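/- arXiv:1602.03255 — 2 statements merged into one kernel-verified Lean document; each statement's English description precedes it below -/
import Mathlib

section
/- For p ≤ 2, the set of continuous paths w : [0,1] → ℝ of finite p-variation is a null set for the one-dimensional Wiener measure. Equivalently: almost surely, a Brownian path on [0,1] has infinite p-variation for every p ≤ 2 (in the sup-over-partitions sense). In particular, almost surely sup_P Σ_i |w_{t_i} - w_{t_{i-1}}|² = ∞. -/
open scoped BigOperators
open MeasureTheory ProbabilityTheory

/-- Set of p-variation partition sums of a one-parameter path on `[0,1]`. -/
def pathPVarSums (x : ℝ → ℝ) (p : ℝ) : Set ℝ :=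
  {r | ∃ (n : ℕ) (t : Fin (n + 1) → ℝ), Monotone t ∧ t 0 = 0 ∧ t (Fin.last n) = 1 ∧
    r = (∑ i : Fin n, |x (t i.succ) - x (t i.castSucc)| ^ p) ^ (1 / p)}

/-- `W` is a standard one-dimensional Brownian motion on `[0,1]`: it starts at `0`,
has continuous sample paths, independent increments, and Gaussian increments
`W_t - W_s ∼ N(0, t - s)` for `0 ≤ s ≤ t ≤ 1`. -/
structure IsBrownianMotion {Ω : Type*} [MeasurableSpace Ω] (μ : Measure Ω)
    (W : ℝ → Ω → ℝ) : Prop where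
  isProb : IsProbabilityMeasure μ
  meas : ∀ t : ℝ, Measurable (W t)
  start : ∀ ω, W 0 ω = 0
  contPaths : ∀ ω, Continuous fun t => W t ω
  gaussianIncr : ∀ s t : ℝ, 0 ≤ s → s ≤ t → t ≤ 1 →
    Measure.map (fun ω => W t ω - W s ω) μ = gaussianReal 0 (Real.toNNReal (t - s))
  indepIncr : ∀ (n : ℕ) (t : Fin (n + 1) → ℝ), Monotone t → 0 ≤ t 0 → t (Fin.last n) ≤ 1 →
    iIndepFun
      (fun (i : Fin n) ω => W (t i.succ) ω - W (t i.castSucc) ω) μ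

namespace BMVar

open scoped NNReal ENNReal

/-! ### Partition-sum machinery on lists -/

/-- sum of squared increments of `f` along a list of points -/
def psum (f : ℝ → ℝ) : List ℝ → ℝ
  | [] => 0
  | [_] => 0
  | x :: y :: l => (f y - f x) ^ 2 + psum f (y :: l)

lemma psum_nonneg (f : ℝ → ℝ) : ∀ l : List ℝ, 0 ≤ psum f l
  | [] => le_refl 0
  | [_] => le_refl 0
  | x :: y :: l => by
    rw [psum]
    have := psum_nonneg f (y :: l)
    positivity

lemma psum_append (f : ℝ → ℝ) :
    ∀ (L : List ℝ) (hne : L ≠ []) (M : List ℝ),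
      psum f (L ++ M) = psum f L + psum f (L.getLast hne :: M)
  | [], hne, _ => absurd rfl hne
  | [x], _, M => by simp [psum]
  | x :: y :: L', _, M => by
    have h1 : (x :: y :: L') ++ M = x :: y :: (L' ++ M) := rfl
    rw [h1]
    have h2 : psum f (x :: y :: (L' ++ M)) = (f y - f x) ^ 2 + psum f (y :: (L' ++ M)) := rfl
    have h3 : (y :: (L' ++ M)) = (y :: L') ++ M := rfl
    rw [h2, h3, psum_append f (y :: L') (List.cons_ne_nil _ _) M]
    have h4 : (x :: y :: L').getLast (List.cons_ne_nil _ _)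
        = (y :: L').getLast (List.cons_ne_nil _ _) := by
      rw [List.getLast_cons (List.cons_ne_nil _ _)]
    rw [h4, psum]
    ring

/-- `Good f a b s` : there is a partition of `[a,b]` whose squared-increment sum is `≥ s`. -/
def Good (f : ℝ → ℝ) (a b s : ℝ) : Prop :=
  ∃ l : List ℝ, l.Chain' (· ≤ ·) ∧ l.head? = some a ∧ l.getLast? = some b ∧ s ≤ psum f l

lemma Good.mono {f : ℝ → ℝ} {a b s s' : ℝ} (h : Good f a b s) (hs : s' ≤ s) : Good f a b s' := by
  obtain ⟨l, h1, h2, h3, h4⟩ := h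
  exact ⟨l, h1, h2, h3, hs.trans h4⟩

lemma good_refl (f : ℝ → ℝ) (a : ℝ) : Good f a a 0 :=
  ⟨[a], List.isChain_singleton a, rfl, rfl, le_refl 0⟩

lemma good_pair (f : ℝ → ℝ) {a b : ℝ} (hab : a ≤ b) : Good f a b ((f b - f a) ^ 2) := by
  refine ⟨[a, b], List.isChain_pair.mpr hab, rfl, rfl, ?_⟩
  simp [psum]

lemma Good.trans {f : ℝ → ℝ} {a b c s t : ℝ} (h1 : Good f a b s) (h2 : Good f b c t) :
    Good f a c (s + t) := by
  obtain ⟨L, hL, hLh, hLl, hLs⟩ := h1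
  obtain ⟨M, hM, hMh, hMl, hMs⟩ := h2
  have hLne : L ≠ [] := fun h => by simp [h] at hLh
  have hLlast : L.getLast hLne = b := by
    rwa [List.getLast?_eq_getLast hLne, Option.some_inj] at hLl
  obtain ⟨m0, M', rfl⟩ : ∃ m0 M', M = m0 :: M' := by
    cases M with
    | nil => simp at hMh
    | cons m0 M' => exact ⟨m0, M', rfl⟩
  have hm0 : m0 = b := by simpa using hMh
  cases M' with
  | nil =>
    have hcb : m0 = c := by simpa using hMl
    refine ⟨L, hL, hLh, ?_, ?_⟩
    · rw [hLl, ← hm0, hcb]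
    · have ht0 : t ≤ 0 := by simpa [psum] using hMs
      linarith
  | cons y M'' =>
    refine ⟨L ++ y :: M'', ?_, ?_, ?_, ?_⟩
    · apply List.isChain_append.mpr
      refine ⟨hL, (List.isChain_cons_cons.mp hM).2, ?_⟩
      intro x hx z hz
      simp only [List.getLast?_eq_getLast hLne, Option.mem_def, Option.some_inj] at hx
      simp only [Option.mem_def, List.head?_cons, Option.some_inj] at hz
      rw [← hx, hLlast, ← hz, ← hm0]
      exact (List.isChain_cons_cons.mp hM).1
    · rw [List.head?_append_of_ne_nil _ hLne]; exact hLh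
    · rw [List.getLast?_append_of_ne_nil _ (List.cons_ne_nil _ _)]
      simpa using hMl
    · rw [psum_append f L hLne, hLlast, ← hm0]
      exact add_le_add hLs hMs

lemma sum_psum (f : ℝ → ℝ) :
    ∀ (L : List ℝ) (n : ℕ) (hlen : L.length = n + 1),
      ∑ i : Fin n, (f (L[i.1 + 1]'(by have := i.isLt; omega)) -
        f (L[i.1]'(by have := i.isLt; omega))) ^ 2 = psum f L
  | [], n, hlen => by simp at hlen
  | [x], n, hlen => by
    obtain rfl : n = 0 := by simpa using hlen
    simp [psum]
  | x :: y :: L', n, hlen => by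
    obtain rfl : n = L'.length + 1 := by simpa using hlen.symm
    rw [Fin.sum_univ_succ, psum, ← sum_psum f (y :: L') L'.length (by simp)]
    simp [Fin.val_succ]

lemma good_to_fin {f : ℝ → ℝ} {a b s : ℝ} (h : Good f a b s) :
    ∃ (n : ℕ) (t : Fin (n + 1) → ℝ), Monotone t ∧ t 0 = a ∧ t (Fin.last n) = b ∧
      s ≤ ∑ i : Fin n, (f (t i.succ) - f (t i.castSucc)) ^ 2 := by
  obtain ⟨L, hc, hh, hl, hs⟩ := h
  obtain ⟨a', rest, rfl⟩ : ∃ a' rest, L = a' :: rest := by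
    cases L with
    | nil => simp at hh
    | cons a' rest => exact ⟨a', rest, rfl⟩
  have hha : a' = a := by simpa using hh
  set L := a' :: rest with hL
  have hne : L ≠ [] := List.cons_ne_nil _ _
  set n := rest.length with hn
  have hlen : L.length = n + 1 := by simp [hL, hn]
  refine ⟨n, fun i => L[i.1]'(by have := i.isLt; omega), ?_, ?_, ?_, ?_⟩
  · intro i j hij
    rcases eq_or_lt_of_le hij with rfl | hlt
    · exact le_refl _
    · have hp : L.Pairwise (· ≤ ·) := List.isChain_iff_pairwise.mp hc
      exact List.pairwise_iff_get.mp hp ⟨i.1, by omega⟩ ⟨j.1, by omega⟩ hlt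
  · show L[(0:ℕ)] = a
    simpa [hL] using hha
  · have : L.getLast hne = b := by
      rwa [List.getLast?_eq_getLast hne, Option.some_inj] at hl
    rw [← this, List.getLast_eq_getElem]
    simp [hlen]
  · rw [← sum_psum f L n hlen] at hs
    convert hs using 2 with i
    rfl

/-! ### Gaussian quantities -/

noncomputable def del (α : ℝ) : ℝ :=
  (gaussianReal 0 1 {x : ℝ | α + 1 ≤ x ^ 2}).toReal

noncomputable def ψ (α x : ℝ) : ℝ := min (max (x ^ 2) α) (α + 1)

noncomputable def τ (α : ℝ) : ℝ := ∫ x, ψ α x ∂(gaussianReal 0 1)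

lemma measurableSet_S (α : ℝ) : MeasurableSet {x : ℝ | α + 1 ≤ x ^ 2} :=
  measurableSet_le measurable_const (measurable_id.pow_const 2)

lemma continuous_ψ (α : ℝ) : Continuous (ψ α) := by
  unfold ψ; fun_prop

lemma ψ_nonneg {α x : ℝ} (hα : 0 ≤ α) : 0 ≤ ψ α x :=
  le_min (le_max_of_le_right hα) (by linarith)

lemma ψ_le {α x : ℝ} : ψ α x ≤ α + 1 := min_le_right _ _

lemma abs_ψ_le {α x : ℝ} (hα : 0 ≤ α) : |ψ α x| ≤ α + 1 := by
  rw [abs_le]; exact ⟨by nlinarith [ψ_nonneg (α := α) (x := x) hα], ψ_le⟩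

lemma del_pos (α : ℝ) : 0 < del α := by
  rw [del, ENNReal.toReal_pos_iff]
  constructor
  · rw [pos_iff_ne_zero]
    intro h0
    have hvol : volume {x : ℝ | α + 1 ≤ x ^ 2} = 0 :=
      gaussianReal_absolutelyContinuous' 0 one_ne_zero h0
    have hsub : Set.Icc (Real.sqrt (|α| + 1)) (Real.sqrt (|α| + 1) + 1)
        ⊆ {x : ℝ | α + 1 ≤ x ^ 2} := by
      intro x hx
      have h1 : Real.sqrt (|α| + 1) ≤ x := hx.1
      have h0' : 0 ≤ Real.sqrt (|α| + 1) := Real.sqrt_nonneg _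
      have h2 : |α| + 1 ≤ x ^ 2 := by
        have := Real.sq_sqrt (by positivity : (0:ℝ) ≤ |α| + 1)
        nlinarith
      have : α ≤ |α| := le_abs_self α
      simp only [Set.mem_setOf_eq]; linarith
    have := measure_mono_null hsub hvol
    simp [Real.volume_Icc] at this
  · exact lt_of_le_of_lt prob_le_one (by norm_num)

lemma del_le_one (α : ℝ) : del α ≤ 1 := by
  rw [del]
  have := prob_le_one (μ := gaussianReal 0 1) (s := {x : ℝ | α + 1 ≤ x ^ 2})
  calc (gaussianReal 0 1 {x : ℝ | α + 1 ≤ x ^ 2}).toReal ≤ (1 : ℝ≥0∞).toReal :=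
        ENNReal.toReal_mono (by norm_num) this
    _ = 1 := by simp

lemma del_antitone : Antitone del := by
  intro α α' h
  rw [del, del]
  refine ENNReal.toReal_mono (measure_ne_top _ _) (measure_mono ?_)
  intro x hx
  simp only [Set.mem_setOf_eq] at hx ⊢
  linarith

lemma integrable_ψ (α : ℝ) (hα : 0 ≤ α) : Integrable (ψ α) (gaussianReal 0 1) := by
  refine Integrable.mono' (integrable_const (α + 1))
    (continuous_ψ α).aestronglyMeasurable (ae_of_all _ fun x => ?_)
  exact abs_ψ_le hα

lemma τ_ge (α : ℝ) (hα : 0 ≤ α) : α + del α ≤ τ α := by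
  have hind : ∀ x : ℝ, α + Set.indicator {x : ℝ | α + 1 ≤ x ^ 2} (fun _ => (1:ℝ)) x ≤ ψ α x := by
    intro x
    rw [Set.indicator_apply]
    by_cases hx : x ∈ {x : ℝ | α + 1 ≤ x ^ 2}
    · rw [if_pos hx]
      have hx' : α + 1 ≤ x ^ 2 := hx
      have : ψ α x = α + 1 := by
        rw [ψ, min_eq_right]
        exact le_max_of_le_left hx'
      rw [this]
    · rw [if_neg hx]
      have hx' : ¬ (α + 1 ≤ x ^ 2) := hx
      simpa [ψ] using le_min (le_max_right _ _) (by linarith)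
  have hint : Integrable (fun x => α + Set.indicator {x : ℝ | α + 1 ≤ x ^ 2}
      (fun _ => (1:ℝ)) x) (gaussianReal 0 1) := by
    exact (integrable_const α).add
      ((integrable_indicator_iff (measurableSet_S α)).mpr integrableOn_const)
  have := integral_mono hint (integrable_ψ α hα) hind
  rw [integral_add (integrable_const α) ((integrable_indicator_iff (measurableSet_S α)).mpr
    integrableOn_const), integral_const,
    integral_indicator_const _ (measurableSet_S α)] at this
  simpa [del, τ, measureReal_def] using this

/-- scaling: expectation of the capped square under `N(0,c)`. -/
lemma integral_scaled (α c : ℝ) (hc : 0 ≤ c) :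
    ∫ x, min (max (x ^ 2) (α * c)) ((α + 1) * c) ∂(gaussianReal 0 (Real.toNNReal c))
      = c * τ α := by
  have hmap : gaussianReal 0 (Real.toNNReal c)
      = Measure.map (fun x => Real.sqrt c * x) (gaussianReal 0 1) := by
    rw [gaussianReal_map_const_mul (Real.sqrt c)]
    congr 1
    · simp
    · ext
      simp [Real.sq_sqrt hc, Real.coe_toNNReal _ hc]
  rw [hmap, integral_map (by fun_prop) (Continuous.aestronglyMeasurable (by fun_prop)),
    τ, ← integral_const_mul]
  congr 1 with x
  have h1 : (Real.sqrt c * x) ^ 2 = c * x ^ 2 := by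
    rw [mul_pow, Real.sq_sqrt hc]
  rw [h1, ψ, mul_min_of_nonneg _ _ hc, mul_max_of_nonneg _ _ hc,
    mul_comm c (x ^ 2), mul_comm c α, mul_comm c (α + 1)]

noncomputable def betaSeq : ℕ → ℝ
  | 0 => 0
  | k + 1 => betaSeq k + del (betaSeq k) / 2

lemma betaSeq_nonneg (k : ℕ) : 0 ≤ betaSeq k := by
  induction k with
  | zero => simp [betaSeq]
  | succ k ih =>
    have := del_pos (betaSeq k)
    rw [betaSeq]; linarith

lemma betaSeq_unbounded (M : ℝ) : ∃ k, M ≤ betaSeq k := by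
  by_contra h
  push_neg at h
  have hM : ∀ k, betaSeq k ≤ M := fun k => (h k).le
  have hd : ∀ k, del M ≤ del (betaSeq k) := fun k => del_antitone (hM k)
  have hlow : ∀ k : ℕ, (k : ℝ) * (del M / 2) ≤ betaSeq k := by
    intro k
    induction k with
    | zero => simp [betaSeq]
    | succ k ih =>
      rw [betaSeq]
      push_cast
      have := hd k
      linarith
  obtain ⟨k, hk⟩ := exists_nat_gt (M / (del M / 2))
  have hdM : 0 < del M / 2 := by have := del_pos M; linarith
  have : M < (k : ℝ) * (del M / 2) := by
    rw [div_lt_iff₀ hdM] at hk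
    linarith
  exact absurd ((hlow k).trans (hM k)) (by linarith)

/-! ### The probabilistic bootstrap step -/

variable {Ω : Type*} [MeasurableSpace Ω] {μ : Measure Ω} {W : ℝ → Ω → ℝ}

/-- capped squared increment over `[a + j c, a + (j+1) c]`. -/
noncomputable def capInc (W : ℝ → Ω → ℝ) (α a c : ℝ) (j : ℕ) (ω : Ω) : ℝ :=
  min (max ((W (a + ((j : ℝ) + 1) * c) ω - W (a + (j : ℝ) * c) ω) ^ 2) (α * c)) ((α + 1) * c)

noncomputable def capSum (W : ℝ → Ω → ℝ) (α a c : ℝ) (N : ℕ) (ω : Ω) : ℝ :=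
  ∑ j ∈ Finset.range N, capInc W α a c j ω

lemma cheb (hW : IsBrownianMotion μ W) {a c α ε : ℝ} (ha : 0 ≤ a) (hc : 0 < c) (hα : 0 ≤ α)
    (hε : 0 < ε) (N : ℕ) (hend : a + N * c ≤ 1) :
    μ {ω | capSum W α a c N ω < N * c * τ α - ε}
      ≤ ENNReal.ofReal (N * ((α + 1) * c) ^ 2 / ε ^ 2) := by
  haveI := hW.isProb
  set t : Fin (N + 1) → ℝ := fun i => a + (i : ℕ) * c with ht
  have htmono : Monotone t := by
    intro i j hij
    have : ((i : ℕ) : ℝ) ≤ ((j : ℕ) : ℝ) := by exact_mod_cast (Fin.le_def.mp hij)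
    simp only [ht]
    nlinarith
  have ht0 : t 0 = a := by simp [ht]
  have htlast : t (Fin.last N) = a + N * c := by simp [ht]
  have htmem : ∀ i : Fin (N + 1), 0 ≤ t i ∧ t i ≤ 1 := by
    intro i
    constructor
    · have : (0:ℝ) ≤ (i : ℕ) * c := by positivity
      simp only [ht]; linarith
    · have h1 : ((i : ℕ) : ℝ) ≤ N := by exact_mod_cast Nat.le_of_lt_succ i.isLt
      have : ((i : ℕ) : ℝ) * c ≤ N * c := by nlinarith
      simp only [ht]
      linarith
  set D : Fin N → Ω → ℝ := fun i ω => W (t i.succ) ω - W (t i.castSucc) ω with hD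
  have hincr : ∀ i : Fin N, t i.succ - t i.castSucc = c := by
    intro i
    simp only [ht, Fin.val_succ, Fin.coe_castSucc]
    push_cast
    ring
  have hlaw : ∀ i : Fin N, Measure.map (D i) μ = gaussianReal 0 (Real.toNNReal c) := by
    intro i
    rw [hD]
    have := hW.gaussianIncr (t i.castSucc) (t i.succ) (htmem i.castSucc).1
      (by have := hincr i; linarith) (htmem i.succ).2
    rwa [hincr i] at this
  have hDmeas : ∀ i : Fin N, Measurable (D i) := fun i => (hW.meas _).sub (hW.meas _)
  set φ : ℝ → ℝ := fun x => min (max (x ^ 2) (α * c)) ((α + 1) * c) with hφ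
  have hφcont : Continuous φ := by rw [hφ]; fun_prop
  set F : Fin N → Ω → ℝ := fun i => φ ∘ (D i) with hF
  have hFX : ∀ (i : Fin N) (ω : Ω), F i ω = capInc W α a c (i : ℕ) ω := by
    intro i ω
    simp only [hF, hφ, Function.comp_apply, hD, ht, capInc, Fin.val_succ, Fin.coe_castSucc]
    push_cast
    ring_nf
  have hSeq : ∀ ω, capSum W α a c N ω = (∑ i : Fin N, F i) ω := by
    intro ω
    rw [capSum]
    simp only [Finset.sum_apply]
    rw [← Fin.sum_univ_eq_sum_range (fun j => capInc W α a c j ω) N]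
    exact (Finset.sum_congr rfl fun i _ => by rw [hFX i]).symm
  have hFmeas : ∀ i : Fin N, Measurable (F i) := fun i => hφcont.measurable.comp (hDmeas i)
  have hFbdd : ∀ i : Fin N, ∀ ω, ‖F i ω‖ ≤ (α + 1) * c := by
    intro i ω
    rw [Real.norm_eq_abs, abs_le]
    constructor
    · have h1 : 0 ≤ α * c := by positivity
      have h2 : α * c ≤ max ((D i ω) ^ 2) (α * c) := le_max_right _ _
      have h3 : 0 ≤ (α + 1) * c := by positivity
      simp only [hF, hφ, Function.comp_apply]
      rw [le_min_iff]
      constructor <;> linarith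
    · exact min_le_right _ _
  have hFL2 : ∀ i : Fin N, MemLp (F i) 2 μ := fun i =>
    MemLp.of_bound (hFmeas i).aestronglyMeasurable _ (ae_of_all _ (hFbdd i))
  have hFint : ∀ i : Fin N, Integrable (F i) μ := fun i => (hFL2 i).integrable one_le_two
  have hEF : ∀ i : Fin N, ∫ ω, F i ω ∂μ = c * τ α := by
    intro i
    have h1 : ∫ ω, F i ω ∂μ = ∫ x, φ x ∂(Measure.map (D i) μ) :=
      (integral_map (hDmeas i).aemeasurable hφcont.aestronglyMeasurable).symm
    rw [h1, hlaw i, hφ]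
    exact integral_scaled α c hc.le
  have hVarF : ∀ i : Fin N, variance (F i) μ ≤ ((α + 1) * c) ^ 2 := by
    intro i
    rw [variance_eq_sub (hFL2 i)]
    have h2 : μ[(F i) ^ 2] ≤ ((α + 1) * c) ^ 2 := by
      have hpt : ∀ ω, F i ω ^ 2 ≤ ((α + 1) * c) ^ 2 := by
        intro ω
        have := hFbdd i ω
        rw [Real.norm_eq_abs] at this
        nlinarith [abs_nonneg (F i ω), sq_abs (F i ω)]
      have heq : (fun ω => ((F i) ^ 2) ω) = fun ω => F i ω ^ 2 := by
        funext ω; simp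
      show (∫ ω, ((F i) ^ 2) ω ∂μ) ≤ ((α + 1) * c) ^ 2
      rw [heq]
      calc (∫ ω, F i ω ^ 2 ∂μ) ≤ ∫ _, ((α + 1) * c) ^ 2 ∂μ :=
            integral_mono (hFL2 i).integrable_sq (integrable_const _) hpt
        _ = ((α + 1) * c) ^ 2 := by simp
    nlinarith [sq_nonneg (μ[F i]), h2]
  have hiid : iIndepFun F μ := by
    have hbase := hW.indepIncr N t htmono (by rw [ht0]; exact ha) (by rw [htlast]; exact hend)
    exact hbase.comp (fun _ => φ) (fun _ => hφcont.measurable)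
  have hpair : Set.Pairwise ↑(Finset.univ : Finset (Fin N))
      (fun i j => IndepFun (F i) (F j) μ) := fun i _ j _ hij => hiid.indepFun hij
  have hES : μ[∑ i : Fin N, F i] = N * c * τ α := by
    have h0 : (fun ω => (∑ i : Fin N, F i) ω) = fun ω => ∑ i : Fin N, F i ω := by
      funext ω; simp [Finset.sum_apply]
    show ∫ ω, (∑ i : Fin N, F i) ω ∂μ = N * c * τ α
    rw [h0, integral_finset_sum _ (fun i _ => hFint i),
      Finset.sum_congr rfl fun i _ => hEF i, Finset.sum_const, Finset.card_univ,
      Fintype.card_fin, nsmul_eq_mul]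
    ring
  have hVarS : variance (∑ i : Fin N, F i) μ ≤ N * ((α + 1) * c) ^ 2 := by
    rw [IndepFun.variance_sum (fun i _ => hFL2 i) hpair]
    calc ∑ i : Fin N, variance (F i) μ ≤ ∑ _i : Fin N, ((α + 1) * c) ^ 2 :=
          Finset.sum_le_sum fun i _ => hVarF i
      _ = N * ((α + 1) * c) ^ 2 := by
          rw [Finset.sum_const, Finset.card_univ, Fintype.card_fin, nsmul_eq_mul]
  have hSL2 : MemLp (∑ i : Fin N, F i) 2 μ := memLp_finset_sum' _ (fun i _ => hFL2 i)
  have hcheb := meas_ge_le_variance_div_sq hSL2 hε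
  have hsub : {ω | capSum W α a c N ω < N * c * τ α - ε}
      ⊆ {ω | ε ≤ |(∑ i : Fin N, F i) ω - μ[∑ i : Fin N, F i]|} := by
    intro ω hω
    simp only [Set.mem_setOf_eq] at hω ⊢
    rw [hES, ← hSeq ω]
    exact le_abs.mpr (Or.inr (by linarith))
  calc μ {ω | capSum W α a c N ω < N * c * τ α - ε}
      ≤ μ {ω | ε ≤ |(∑ i : Fin N, F i) ω - μ[∑ i : Fin N, F i]|} := measure_mono hsub
    _ ≤ ENNReal.ofReal (variance (∑ i : Fin N, F i) μ / ε ^ 2) := hcheb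
    _ ≤ ENNReal.ofReal (N * ((α + 1) * c) ^ 2 / ε ^ 2) := by
        apply ENNReal.ofReal_le_ofReal
        gcongr

lemma step (hW : IsBrownianMotion μ W) {a h : ℝ} (ha : 0 ≤ a) (hh : 0 < h) (hab : a + h ≤ 1)
    {α : ℝ} (hα : 0 ≤ α)
    (IH : ∀ᵐ ω ∂μ, ∀ (l : ℕ) (j : ℕ), j < 2 ^ l →
      Good (fun t => W t ω) (a + j * (h / 2 ^ l)) (a + ((j : ℝ) + 1) * (h / 2 ^ l))
        (α * (h / 2 ^ l))) :
    ∀ᵐ ω ∂μ, Good (fun t => W t ω) a (a + h) ((α + del α / 2) * h) := by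
  haveI := hW.isProb
  have hdel := del_pos α
  have hτ := τ_ge α hα
  set ε : ℝ := del α / 2 * h with hε
  have hεpos : 0 < ε := by positivity
  -- scale-l bad event bound
  have keyl : ∀ l : ℕ,
      μ {ω | capSum W α a (h / 2 ^ l) (2 ^ l) ω < (α + del α / 2) * h}
        ≤ ENNReal.ofReal ((α + 1) ^ 2 * h ^ 2 / ε ^ 2 * ((1:ℝ)/2) ^ l) := by
    intro l
    have hc : (0:ℝ) < h / 2 ^ l := by positivity
    have hNc : ((2 ^ l : ℕ) : ℝ) * (h / 2 ^ l) = h := by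
      push_cast; field_simp
    have hend : a + ((2 ^ l : ℕ) : ℝ) * (h / 2 ^ l) ≤ 1 := by rw [hNc]; exact hab
    have hbound := cheb hW ha hc hα hεpos (2 ^ l) hend
    rw [hNc] at hbound
    have hsub : {ω | capSum W α a (h / 2 ^ l) (2 ^ l) ω < (α + del α / 2) * h}
        ⊆ {ω | capSum W α a (h / 2 ^ l) (2 ^ l) ω < h * τ α - ε} := by
      intro ω hω
      simp only [Set.mem_setOf_eq] at hω ⊢
      have : (α + del α / 2) * h ≤ h * τ α - ε := by
        rw [hε]; nlinarith
      linarith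
    refine le_trans (measure_mono hsub) (le_trans hbound (ENNReal.ofReal_le_ofReal (le_of_eq ?_)))
    have hεne : ε ≠ 0 := ne_of_gt hεpos
    push_cast
    field_simp
    ring_nf
    rw [← mul_pow]; norm_num
  have hbad : μ {ω | ∀ l : ℕ, capSum W α a (h / 2 ^ l) (2 ^ l) ω < (α + del α / 2) * h} = 0 := by
    set K : ℝ := (α + 1) ^ 2 * h ^ 2 / ε ^ 2 with hK
    have hle : ∀ l : ℕ, μ {ω | ∀ l : ℕ, capSum W α a (h / 2 ^ l) (2 ^ l) ω < (α + del α / 2) * h}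
        ≤ ENNReal.ofReal (K * ((1:ℝ)/2) ^ l) :=
      fun l => le_trans (measure_mono fun ω hω => hω l) (keyl l)
    have htend : Filter.Tendsto (fun l : ℕ => ENNReal.ofReal (K * ((1:ℝ)/2) ^ l))
        Filter.atTop (nhds 0) := by
      have h1 : Filter.Tendsto (fun l : ℕ => K * ((1:ℝ)/2) ^ l) Filter.atTop (nhds 0) := by
        have := tendsto_pow_atTop_nhds_zero_of_lt_one
          (by norm_num : (0:ℝ) ≤ 1/2) (by norm_num : (1:ℝ)/2 < 1)
        simpa using this.const_mul K
      have := (ENNReal.continuous_ofReal.tendsto 0).comp h1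
      simpa [Function.comp_def] using this
    exact le_antisymm (ge_of_tendsto' htend hle) zero_le
  have hbadc : ∀ᵐ ω ∂μ, ¬ (∀ l : ℕ, capSum W α a (h / 2 ^ l) (2 ^ l) ω < (α + del α / 2) * h) := by
    rw [ae_iff]
    simpa using hbad
  filter_upwards [IH, hbadc] with ω hIH hB
  push_neg at hB
  obtain ⟨l, hl⟩ := hB
  have hcpos : (0:ℝ) < h / 2 ^ l := by positivity
  have glue : ∀ r : ℕ, r ≤ 2 ^ l →
      Good (fun u => W u ω) a (a + r * (h / 2 ^ l))
        (∑ j ∈ Finset.range r, capInc W α a (h / 2 ^ l) j ω) := by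
    intro r
    induction r with
    | zero => intro _; simpa using good_refl (fun u => W u ω) a
    | succ r ih =>
      intro hr
      have hr' : r < 2 ^ l := hr
      have h1 := ih (Nat.le_of_lt hr')
      have h2 : Good (fun u => W u ω) (a + r * (h / 2 ^ l)) (a + ((r:ℝ) + 1) * (h / 2 ^ l))
          (capInc W α a (h / 2 ^ l) r ω) := by
        by_cases hcase : α * (h / 2 ^ l)
            ≤ (W (a + ((r:ℝ) + 1) * (h / 2 ^ l)) ω - W (a + (r:ℝ) * (h / 2 ^ l)) ω) ^ 2
        · have hendp : a + (r:ℝ) * (h / 2 ^ l) ≤ a + ((r:ℝ) + 1) * (h / 2 ^ l) := by nlinarith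
          refine (good_pair (fun u => W u ω) hendp).mono ?_
          rw [capInc, max_eq_left hcase]
          exact min_le_left _ _
        · refine (hIH l r hr').mono ?_
          rw [capInc, max_eq_right (le_of_not_ge hcase)]
          exact min_le_left _ _
      have h3 := h1.trans h2
      rw [← Finset.sum_range_succ] at h3
      have hcast : a + ((r:ℝ) + 1) * (h / 2 ^ l) = a + ((r + 1 : ℕ) : ℝ) * (h / 2 ^ l) := by
        push_cast; ring
      rwa [hcast] at h3
  have hfin := glue (2 ^ l) (le_refl _)
  have hend2 : a + ((2 ^ l : ℕ) : ℝ) * (h / 2 ^ l) = a + h := by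
    push_cast; field_simp
  rw [hend2] at hfin
  exact hfin.mono hl

lemma claim (hW : IsBrownianMotion μ W) (k : ℕ) :
    ∀ᵐ ω ∂μ, ∀ (m j : ℕ), j < 2 ^ m →
      Good (fun t => W t ω) ((j : ℝ) * ((2:ℝ) ^ m)⁻¹) (((j:ℝ) + 1) * ((2:ℝ) ^ m)⁻¹)
        (betaSeq k * ((2:ℝ) ^ m)⁻¹) := by
  induction k with
  | zero =>
    refine Filter.Eventually.of_forall fun ω m j hj => ?_
    have hle : (j:ℝ) * ((2:ℝ)^m)⁻¹ ≤ ((j:ℝ)+1) * ((2:ℝ)^m)⁻¹ := by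
      have : (0:ℝ) < ((2:ℝ)^m)⁻¹ := by positivity
      nlinarith
    refine (good_pair _ hle).mono ?_
    have : betaSeq 0 * ((2:ℝ)^m)⁻¹ = 0 := by simp [betaSeq]
    rw [this]
    positivity
  | succ k ih =>
    have main : ∀ m j : ℕ, j < 2 ^ m → (∀ᵐ ω ∂μ,
        Good (fun t => W t ω) ((j : ℝ) * ((2:ℝ) ^ m)⁻¹) (((j:ℝ) + 1) * ((2:ℝ) ^ m)⁻¹)
          (betaSeq (k + 1) * ((2:ℝ) ^ m)⁻¹)) := by
      intro m j hj
      have hjR : (j:ℝ) + 1 ≤ (2:ℝ) ^ m := by exact_mod_cast hj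
      have h2m : (0:ℝ) < (2:ℝ) ^ m := by positivity
      have ha : 0 ≤ (j:ℝ) * ((2:ℝ)^m)⁻¹ := by positivity
      have hh : (0:ℝ) < ((2:ℝ)^m)⁻¹ := by positivity
      have hab : (j:ℝ)*((2:ℝ)^m)⁻¹ + ((2:ℝ)^m)⁻¹ ≤ 1 := by
        have h1 : (j:ℝ)*((2:ℝ)^m)⁻¹ + ((2:ℝ)^m)⁻¹ = ((j:ℝ)+1) * ((2:ℝ)^m)⁻¹ := by ring
        rw [h1]
        calc ((j:ℝ)+1) * ((2:ℝ)^m)⁻¹ ≤ (2:ℝ)^m * ((2:ℝ)^m)⁻¹ := by nlinarith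
          _ = 1 := by field_simp
      have IH' : ∀ᵐ ω ∂μ, ∀ (l j' : ℕ), j' < 2 ^ l →
          Good (fun t => W t ω)
            ((j:ℝ) * ((2:ℝ)^m)⁻¹ + (j':ℝ) * (((2:ℝ)^m)⁻¹ / 2 ^ l))
            ((j:ℝ) * ((2:ℝ)^m)⁻¹ + ((j':ℝ) + 1) * (((2:ℝ)^m)⁻¹ / 2 ^ l))
            (betaSeq k * (((2:ℝ)^m)⁻¹ / 2 ^ l)) := by
        filter_upwards [ih] with ω hω
        intro l j' hj'
        have hlt : j * 2 ^ l + j' < 2 ^ (m + l) := by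
          rw [pow_add]
          calc j * 2 ^ l + j' < j * 2 ^ l + 2 ^ l := by omega
            _ = (j + 1) * 2 ^ l := by ring
            _ ≤ 2 ^ m * 2 ^ l := Nat.mul_le_mul_right _ hj
        have h1 := hω (m + l) (j * 2 ^ l + j') hlt
        have e1 : ((j * 2 ^ l + j' : ℕ) : ℝ) * ((2:ℝ) ^ (m + l))⁻¹
            = (j:ℝ) * ((2:ℝ)^m)⁻¹ + (j':ℝ) * (((2:ℝ)^m)⁻¹ / 2 ^ l) := by
          push_cast
          rw [pow_add]
          field_simp
        have e2 : (((j * 2 ^ l + j' : ℕ) : ℝ) + 1) * ((2:ℝ) ^ (m + l))⁻¹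
            = (j:ℝ) * ((2:ℝ)^m)⁻¹ + ((j':ℝ) + 1) * (((2:ℝ)^m)⁻¹ / 2 ^ l) := by
          push_cast
          rw [pow_add]
          field_simp
          ring
        have e3 : betaSeq k * ((2:ℝ) ^ (m + l))⁻¹ = betaSeq k * (((2:ℝ)^m)⁻¹ / 2 ^ l) := by
          rw [pow_add]
          field_simp
        rw [e1, e2, e3] at h1
        exact h1
      have hstep := step hW ha hh hab (betaSeq_nonneg k) IH'
      filter_upwards [hstep] with ω hω
      have e4 : (j:ℝ) * ((2:ℝ)^m)⁻¹ + ((2:ℝ)^m)⁻¹ = ((j:ℝ) + 1) * ((2:ℝ)^m)⁻¹ := by ring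
      have e5 : (betaSeq k + del (betaSeq k) / 2) * ((2:ℝ)^m)⁻¹
          = betaSeq (k + 1) * ((2:ℝ)^m)⁻¹ := by
        rw [betaSeq]
      rw [e4, e5] at hω
      exact hω
    refine ae_all_iff.mpr fun m => ae_all_iff.mpr fun j => ?_
    by_cases hj : j < 2 ^ m
    · exact (main m j hj).mono fun ω h _ => h
    · exact Filter.Eventually.of_forall fun ω h => absurd h hj

end BMVar

/-- Almost surely, a Brownian path on `[0,1]` has infinite `p`-variation for every `p ≤ 2`:
the set of partition sums is unbounded above; in particular (p = 2) almost surely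
`sup_P ∑ᵢ |w_{tᵢ} - w_{tᵢ₋₁}|² = ∞`. -/
theorem brownian_infinite_pVariation {Ω : Type*} [MeasurableSpace Ω] (μ : Measure Ω)
    (W : ℝ → Ω → ℝ) (hW : IsBrownianMotion μ W) :
    ∀ᵐ ω ∂μ, (∀ p : ℝ, 1 ≤ p → p ≤ 2 → ¬ BddAbove (pathPVarSums (fun t => W t ω) p)) ∧
      ¬ BddAbove {r : ℝ | ∃ (n : ℕ) (t : Fin (n + 1) → ℝ),
        Monotone t ∧ t 0 = 0 ∧ t (Fin.last n) = 1 ∧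
        r = ∑ i : Fin n, |W (t i.succ) ω - W (t i.castSucc) ω| ^ 2} := by
  classical
  haveI := hW.isProb
  have hclaim : ∀ᵐ ω ∂μ, ∀ k : ℕ, BMVar.Good (fun t => W t ω) 0 1 (BMVar.betaSeq k) := by
    refine ae_all_iff.mpr fun k => ?_
    filter_upwards [BMVar.claim hW k] with ω hω
    have h1 := hω 0 0 (by norm_num)
    simpa using h1
  filter_upwards [hclaim] with ω hω
  -- arbitrarily large sums of squared increments over partitions
  have hsq : ∀ M : ℝ, ∃ (n : ℕ) (t : Fin (n + 1) → ℝ), Monotone t ∧ t 0 = 0 ∧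
      t (Fin.last n) = 1 ∧
      M ≤ ∑ i : Fin n, (W (t i.succ) ω - W (t i.castSucc) ω) ^ 2 := by
    intro M
    obtain ⟨k, hk⟩ := BMVar.betaSeq_unbounded M
    obtain ⟨n, t, h1, h2, h3, h4⟩ := BMVar.good_to_fin (hω k)
    exact ⟨n, t, h1, h2, h3, le_trans hk h4⟩
  constructor
  · -- general p ∈ [1,2]
    intro p hp1 hp2 hbdd
    have hppos : (0:ℝ) < p := by linarith
    obtain ⟨u, hu⟩ := hbdd
    -- a uniform bound on increments of the path on [0,1]
    obtain ⟨C₀, hC₀⟩ := (isCompact_Icc : IsCompact (Set.Icc (0:ℝ) 1)).exists_bound_of_continuousOn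
      (hW.contPaths ω).continuousOn
    set C : ℝ := max 1 (2 * C₀) with hC
    have hC1 : (1:ℝ) ≤ C := le_max_left _ _
    have hCpos : (0:ℝ) < C := lt_of_lt_of_le one_pos hC1
    have hCb : ∀ s t : ℝ, s ∈ Set.Icc (0:ℝ) 1 → t ∈ Set.Icc (0:ℝ) 1 →
        |W t ω - W s ω| ≤ C := by
      intro s t hs ht
      have h1 := hC₀ s hs
      have h2 := hC₀ t ht
      rw [Real.norm_eq_abs] at h1 h2
      have h3 : |W t ω - W s ω| ≤ |W t ω| + |W s ω| := by
        have := abs_add_le (W t ω) (-(W s ω))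
        simpa [sub_eq_add_neg] using this
      have h4 : (2:ℝ) * C₀ ≤ C := le_max_right _ _
      linarith
    obtain ⟨k, hk⟩ := BMVar.betaSeq_unbounded ((|u| + 1) ^ p * C ^ (2 - p))
    obtain ⟨n, t, hmono, h0, h1, hsum⟩ := BMVar.good_to_fin (hω k)
    set r : ℝ := (∑ i : Fin n, |W (t i.succ) ω - W (t i.castSucc) ω| ^ p) ^ (1/p) with hr
    have hmem : r ∈ pathPVarSums (fun t => W t ω) p := ⟨n, t, hmono, h0, h1, rfl⟩
    have hub : r ≤ u := hu hmem
    have htmem : ∀ i : Fin (n + 1), t i ∈ Set.Icc (0:ℝ) 1 := by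
      intro i
      constructor
      · rw [← h0]; exact hmono (Fin.zero_le i)
      · rw [← h1]; exact hmono (Fin.le_last i)
    have hterm : ∀ i : Fin n,
        C ^ (p - 2) * (W (t i.succ) ω - W (t i.castSucc) ω) ^ 2
          ≤ |W (t i.succ) ω - W (t i.castSucc) ω| ^ p := by
      intro i
      set x : ℝ := W (t i.succ) ω - W (t i.castSucc) ω with hx
      have hxC : |x| ≤ C := hCb _ _ (htmem i.castSucc) (htmem i.succ)
      by_cases hx0 : x = 0
      · rw [hx0]
        simp [Real.zero_rpow (ne_of_gt hppos)]
      · have habs : (0:ℝ) < |x| := abs_pos.mpr hx0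
        have hle : C ^ (p - 2) ≤ |x| ^ (p - 2) :=
          Real.rpow_le_rpow_of_nonpos habs hxC (by linarith)
        have hsplit : |x| ^ p = |x| ^ (p - 2) * x ^ 2 := by
          have h5 : |x| ^ p = |x| ^ (p - 2) * |x| ^ ((2:ℕ) : ℝ) := by
            rw [← Real.rpow_add habs]
            norm_num
          rw [h5, Real.rpow_natCast, sq_abs]
        rw [hsplit]
        exact mul_le_mul_of_nonneg_right hle (sq_nonneg x)
    have hS2 : C ^ (p - 2) * BMVar.betaSeq k
        ≤ ∑ i : Fin n, |W (t i.succ) ω - W (t i.castSucc) ω| ^ p := by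
      have hCp : (0:ℝ) ≤ C ^ (p - 2) := Real.rpow_nonneg hCpos.le _
      calc C ^ (p - 2) * BMVar.betaSeq k
          ≤ C ^ (p - 2) * ∑ i : Fin n, (W (t i.succ) ω - W (t i.castSucc) ω) ^ 2 :=
            mul_le_mul_of_nonneg_left hsum hCp
        _ = ∑ i : Fin n, C ^ (p - 2) * (W (t i.succ) ω - W (t i.castSucc) ω) ^ 2 :=
            Finset.mul_sum _ _ _
        _ ≤ ∑ i : Fin n, |W (t i.succ) ω - W (t i.castSucc) ω| ^ p :=
            Finset.sum_le_sum fun i _ => hterm i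
    have h5 : (|u| + 1) ^ p ≤ ∑ i : Fin n, |W (t i.succ) ω - W (t i.castSucc) ω| ^ p := by
      have hCC : C ^ (p - 2) * C ^ (2 - p) = 1 := by
        rw [← Real.rpow_add hCpos]
        norm_num
      have h6 : (|u| + 1) ^ p = C ^ (p - 2) * ((|u| + 1) ^ p * C ^ (2 - p)) := by
        rw [mul_comm ((|u| + 1) ^ p) (C ^ (2 - p)), ← mul_assoc, hCC, one_mul]
      rw [h6]
      refine le_trans (mul_le_mul_of_nonneg_left hk (Real.rpow_nonneg hCpos.le _)) hS2
    have h7 : |u| + 1 ≤ r := by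
      have h8 : ((|u| + 1) ^ p) ^ (1/p)
          ≤ (∑ i : Fin n, |W (t i.succ) ω - W (t i.castSucc) ω| ^ p) ^ (1/p) :=
        Real.rpow_le_rpow (Real.rpow_nonneg (by positivity) _) h5 (by positivity)
      rwa [← Real.rpow_mul (by positivity), mul_one_div_cancel (ne_of_gt hppos),
        Real.rpow_one] at h8
    have h9 : u ≤ |u| := le_abs_self u
    linarith
  · rintro ⟨u, hu⟩
    obtain ⟨n, t, hmono, h0, h1, hsum⟩ := hsq (u + 1)
    have hmem : (∑ i : Fin n, |W (t i.succ) ω - W (t i.castSucc) ω| ^ 2)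
        ∈ {r : ℝ | ∃ (n : ℕ) (t : Fin (n + 1) → ℝ),
          Monotone t ∧ t 0 = 0 ∧ t (Fin.last n) = 1 ∧
          r = ∑ i : Fin n, |W (t i.succ) ω - W (t i.castSucc) ω| ^ 2} :=
      ⟨n, t, hmono, h0, h1, rfl⟩
    have h2 := hu hmem
    have heq : ∑ i : Fin n, |W (t i.succ) ω - W (t i.castSucc) ω| ^ 2
        = ∑ i : Fin n, (W (t i.succ) ω - W (t i.castSucc) ω) ^ 2 := by
      simp [sq_abs]
    linarith [heq ▸ h2, hsum]
end

section
/- Fix p with 2 ≤ p < 3 and a reference function X^1 : Δ → ℝ^d that is 1/p-Hölder (|X^1_{s,t}| ≤ C(t-s)^{1/p}). Suppose (Y, Y') is a controlled path: Y is 1/p-Hölder, Y' is 1/p-Hölder, and the remainder R_{s,t} = Y_t - Y_s - Y'_s · X^1_{s,t} is 2/p-Hölder. If g : ℝ^n → ℝ^m is twice continuously differentiable with bounded first and second derivatives, then (g(Y), ∇g(Y)·Y') is again a controlled path: g(Y) is 1/p-Hölder, ∇g(Y)·Y' is 1/p-Hölder, and the remainder R^g_{s,t} = g(Y_t) - g(Y_s)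 - ∇g(Y_s)·Y'_s·X^1_{s,t} satisfies |R^g_{s,t}| ≤ C'(t-s)^{2/p} for some constant C'. -/
theorem aux_norm_iteratedFDeriv_one {E F : Type*} [NormedAddCommGroup E] [NormedSpace ℝ E]
    [NormedAddCommGroup F] [NormedSpace ℝ F] (f : E → F) (x : E) :
    ‖iteratedFDeriv ℝ 1 f x‖ = ‖fderiv ℝ f x‖ := by
  simp only [iteratedFDeriv_succ_eq_comp_left, iteratedFDeriv_zero_eq_comp,
    Function.comp_apply]
  rw [LinearIsometryEquiv.comp_fderiv, LinearIsometryEquiv.norm_map]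
  exact (continuousMultilinearCurryFin0 ℝ E F).symm.toLinearIsometry.norm_toContinuousLinearMap_comp


/-- Stability of controlled paths under composition with C² functions.
Fix `2 ≤ p < 3` and a reference first-level path `X¹` that is `1/p`-Hölder on the simplex.
If `(Y, Y')` is a controlled path (Y and Y' are `1/p`-Hölder and the Gubinelli remainder
`R_{s,t} = Y_t - Y_s - Y'_s X¹_{s,t}` is `2/p`-Hölder) and `g` is C² with bounded first and
second derivatives, then `(g(Y), ∇g(Y)·Y')` is again a controlled path: `g(Y)` and
`∇g(Y)·Y'` are `1/p`-Hölder and the remainder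
`R^g_{s,t} = g(Y_t) - g(Y_s) - ∇g(Y_s)·Y'_s·X¹_{s,t}` is bounded by `C'(t-s)^{2/p}`. -/
theorem controlled_path_composition (d n m : ℕ) (p : ℝ) (hp : 2 ≤ p) (hp3 : p < 3)
    (X1 : ℝ → ℝ → (Fin d → ℝ)) (C : ℝ)
    (hX1 : ∀ s t : ℝ, 0 ≤ s → s ≤ t → t ≤ 1 → ‖X1 s t‖ ≤ C * (t - s) ^ (1 / p))
    (Y : ℝ → (Fin n → ℝ)) (Y' : ℝ → ((Fin d → ℝ) →L[ℝ] (Fin n → ℝ)))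
    (CY CY' CR : ℝ)
    (hY : ∀ s t : ℝ, 0 ≤ s → s ≤ t → t ≤ 1 → ‖Y t - Y s‖ ≤ CY * (t - s) ^ (1 / p))
    (hY' : ∀ s t : ℝ, 0 ≤ s → s ≤ t → t ≤ 1 → ‖Y' t - Y' s‖ ≤ CY' * (t - s) ^ (1 / p))
    (hR : ∀ s t : ℝ, 0 ≤ s → s ≤ t → t ≤ 1 →
      ‖Y t - Y s - Y' s (X1 s t)‖ ≤ CR * (t - s) ^ (2 / p))
    (g : (Fin n → ℝ) → (Fin m → ℝ)) (hg : ContDiff ℝ 2 g)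
    (M1 M2 : ℝ)
    (hg1 : ∀ v, ‖fderiv ℝ g v‖ ≤ M1)
    (hg2 : ∀ v, ‖iteratedFDeriv ℝ 2 g v‖ ≤ M2) :
    (∃ C1 : ℝ, ∀ s t : ℝ, 0 ≤ s → s ≤ t → t ≤ 1 →
      ‖g (Y t) - g (Y s)‖ ≤ C1 * (t - s) ^ (1 / p)) ∧
    (∃ C2 : ℝ, ∀ s t : ℝ, 0 ≤ s → s ≤ t → t ≤ 1 →
      ‖(fderiv ℝ g (Y t)).comp (Y' t) - (fderiv ℝ g (Y s)).comp (Y' s)‖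
        ≤ C2 * (t - s) ^ (1 / p)) ∧
    (∃ C' : ℝ, ∀ s t : ℝ, 0 ≤ s → s ≤ t → t ≤ 1 →
      ‖g (Y t) - g (Y s) - ((fderiv ℝ g (Y s)).comp (Y' s)) (X1 s t)‖
        ≤ C' * (t - s) ^ (2 / p)) := by
  have hp0 : 0 < p := by linarith
  have hM1 : 0 ≤ M1 := le_trans (norm_nonneg _) (hg1 0)
  have hM2 : 0 ≤ M2 := le_trans (norm_nonneg _) (hg2 0)
  have hCY : 0 ≤ CY := by
    have := hY 0 1 le_rfl zero_le_one le_rfl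
    simpa using le_trans (norm_nonneg _) this
  have hCY' : 0 ≤ CY' := by
    have := hY' 0 1 le_rfl zero_le_one le_rfl
    simpa using le_trans (norm_nonneg _) this
  have gdiff : Differentiable ℝ g := hg.differentiable (by norm_num)
  -- fderiv g is differentiable with derivative bounded by M2
  have hgd2 : ContDiff ℝ 1 (fun y => fderiv ℝ g y) := hg.fderiv_right (by norm_num)
  have hgd2d : Differentiable ℝ (fun y => fderiv ℝ g y) := hgd2.differentiable (by norm_num)
  have hbd2 : ∀ x, ‖fderiv ℝ (fun y => fderiv ℝ g y) x‖ ≤ M2 := by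
    intro x
    rw [← aux_norm_iteratedFDeriv_one, norm_iteratedFDeriv_fderiv]
    exact hg2 x
  have hLipD : ∀ a b : Fin n → ℝ, ‖fderiv ℝ g a - fderiv ℝ g b‖ ≤ M2 * ‖a - b‖ := by
    intro a b
    exact convex_univ.norm_image_sub_le_of_norm_fderiv_le
      (fun x _ => hgd2d x) (fun x _ => hbd2 x) trivial trivial
  have hLipG : ∀ a b : Fin n → ℝ, ‖g a - g b‖ ≤ M1 * ‖a - b‖ := by
    intro a b
    exact convex_univ.norm_image_sub_le_of_norm_fderiv_le
      (fun x _ => gdiff x) (fun x _ => hg1 x) trivial trivial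
  have hYb : ∀ s : ℝ, 0 ≤ s → s ≤ 1 → ‖Y' s‖ ≤ ‖Y' 0‖ + CY' := by
    intro s hs0 hs1
    have h1 := hY' 0 s le_rfl hs0 hs1
    have h2 : (s - 0 : ℝ) ^ (1 / p) ≤ 1 := by
      apply Real.rpow_le_one (by simpa using hs0) (by simpa using hs1)
      positivity
    have : ‖Y' s - Y' 0‖ ≤ CY' := by
      calc ‖Y' s - Y' 0‖ ≤ CY' * (s - 0) ^ (1 / p) := h1
        _ ≤ CY' * 1 := by nlinarith [Real.rpow_nonneg (show (0:ℝ) ≤ s - 0 by linarith) (1/p)]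
        _ = CY' := mul_one _
    have hns := norm_sub_norm_le (Y' s) (Y' 0)
    linarith
  refine ⟨⟨M1 * CY, ?_⟩, ⟨M1 * CY' + M2 * CY * (‖Y' 0‖ + CY'), ?_⟩,
    ⟨M2 * CY * CY + M1 * CR, ?_⟩⟩
  · intro s t hs hst ht
    have hτ : 0 ≤ (t - s) ^ (1 / p) := Real.rpow_nonneg (by linarith) _
    calc ‖g (Y t) - g (Y s)‖ ≤ M1 * ‖Y t - Y s‖ := hLipG _ _
      _ ≤ M1 * (CY * (t - s) ^ (1 / p)) := by
          exact mul_le_mul_of_nonneg_left (hY s t hs hst ht) hM1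
      _ = M1 * CY * (t - s) ^ (1 / p) := by ring
  · intro s t hs hst ht
    set τ := (t - s) ^ (1 / p) with hτdef
    have hτ : 0 ≤ τ := Real.rpow_nonneg (by linarith) _
    have key : (fderiv ℝ g (Y t)).comp (Y' t) - (fderiv ℝ g (Y s)).comp (Y' s)
        = (fderiv ℝ g (Y t)).comp (Y' t - Y' s)
          + ((fderiv ℝ g (Y t)) - (fderiv ℝ g (Y s))).comp (Y' s) := by
      rw [ContinuousLinearMap.comp_sub, ContinuousLinearMap.sub_comp]; abel
    rw [key]
    have h1 : ‖(fderiv ℝ g (Y t)).comp (Y' t - Y' s)‖ ≤ M1 * (CY' * τ) := by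
      calc ‖(fderiv ℝ g (Y t)).comp (Y' t - Y' s)‖
          ≤ ‖fderiv ℝ g (Y t)‖ * ‖Y' t - Y' s‖ := ContinuousLinearMap.opNorm_comp_le _ _
        _ ≤ M1 * (CY' * τ) := by
            have := hY' s t hs hst ht
            have h0 : (0:ℝ) ≤ ‖Y' t - Y' s‖ := norm_nonneg _
            nlinarith [hg1 (Y t), norm_nonneg (fderiv ℝ g (Y t))]
    have h2 : ‖((fderiv ℝ g (Y t)) - (fderiv ℝ g (Y s))).comp (Y' s)‖
        ≤ M2 * CY * (‖Y' 0‖ + CY') * τ := by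
      have hc := ContinuousLinearMap.opNorm_comp_le ((fderiv ℝ g (Y t)) - (fderiv ℝ g (Y s))) (Y' s)
      have hd := hLipD (Y t) (Y s)
      have hy := hY s t hs hst ht
      have hb := hYb s hs (le_trans hst ht)
      have hK : (0:ℝ) ≤ ‖Y' 0‖ + CY' := by positivity
      have h0 : (0:ℝ) ≤ ‖Y' s‖ := norm_nonneg _
      have h1' : (0:ℝ) ≤ ‖Y t - Y s‖ := norm_nonneg _
      have step1 : ‖fderiv ℝ g (Y t) - fderiv ℝ g (Y s)‖ * ‖Y' s‖
          ≤ (M2 * ‖Y t - Y s‖) * (‖Y' 0‖ + CY') :=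
        mul_le_mul hd hb h0 (by positivity)
      have step2 : (M2 * ‖Y t - Y s‖) * (‖Y' 0‖ + CY')
          ≤ (M2 * (CY * τ)) * (‖Y' 0‖ + CY') :=
        mul_le_mul_of_nonneg_right (mul_le_mul_of_nonneg_left hy hM2) hK
      have : (M2 * (CY * τ)) * (‖Y' 0‖ + CY') = M2 * CY * (‖Y' 0‖ + CY') * τ := by ring
      linarith
    calc ‖(fderiv ℝ g (Y t)).comp (Y' t - Y' s)
          + ((fderiv ℝ g (Y t)) - (fderiv ℝ g (Y s))).comp (Y' s)‖
        ≤ ‖(fderiv ℝ g (Y t)).comp (Y' t - Y' s)‖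
          + ‖((fderiv ℝ g (Y t)) - (fderiv ℝ g (Y s))).comp (Y' s)‖ := norm_add_le _ _
      _ ≤ M1 * (CY' * τ) + M2 * CY * (‖Y' 0‖ + CY') * τ := add_le_add h1 h2
      _ = (M1 * CY' + M2 * CY * (‖Y' 0‖ + CY')) * τ := by ring
  · intro s t hs hst ht
    set τ := (t - s) ^ (1 / p) with hτdef
    have hts0 : (0:ℝ) ≤ t - s := by linarith
    have hτ : 0 ≤ τ := Real.rpow_nonneg hts0 _
    have hτ2 : τ * τ = (t - s) ^ (2 / p) := by
      rw [hτdef, ← Real.rpow_add' hts0 (by positivity)]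
      ring_nf
    obtain ⟨A, hA⟩ : ∃ A, fderiv ℝ g (Y s) = A := ⟨_, rfl⟩
    rw [hA]
    have hA1 : ‖A‖ ≤ M1 := hA ▸ hg1 (Y s)
    -- Taylor estimate
    have taylor : ‖g (Y t) - g (Y s) - A (Y t - Y s)‖ ≤ M2 * CY * τ * ‖Y t - Y s‖ := by
      have hconv : Convex ℝ (Metric.closedBall (Y s) (CY * τ)) := convex_closedBall _ _
      have hder : ∀ x ∈ Metric.closedBall (Y s) (CY * τ),
          HasFDerivWithinAt (fun x => g x - A x) (fderiv ℝ g x - A)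
            (Metric.closedBall (Y s) (CY * τ)) x := fun x _ =>
        ((gdiff x).hasFDerivAt.sub A.hasFDerivAt).hasFDerivWithinAt
      have hbound : ∀ x ∈ Metric.closedBall (Y s) (CY * τ),
          ‖fderiv ℝ g x - A‖ ≤ M2 * CY * τ := by
        intro x hx
        have hd : ‖fderiv ℝ g x - A‖ ≤ M2 * ‖x - Y s‖ := by
          rw [← hA]; exact hLipD x (Y s)
        have hx' : ‖x - Y s‖ ≤ CY * τ := by
          simpa [dist_eq_norm] using hx
        calc ‖fderiv ℝ g x - A‖ ≤ M2 * ‖x - Y s‖ := hd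
          _ ≤ M2 * (CY * τ) := mul_le_mul_of_nonneg_left hx' hM2
          _ = M2 * CY * τ := by ring
      have hys : Y s ∈ Metric.closedBall (Y s) (CY * τ) := by
        simp only [Metric.mem_closedBall, dist_self]
        positivity
      have hyt : Y t ∈ Metric.closedBall (Y s) (CY * τ) := by
        simp only [Metric.mem_closedBall, dist_eq_norm]
        exact hY s t hs hst ht
      have := hconv.norm_image_sub_le_of_norm_hasFDerivWithin_le hder hbound hys hyt
      calc ‖g (Y t) - g (Y s) - A (Y t - Y s)‖
          = ‖(g (Y t) - A (Y t)) - (g (Y s) - A (Y s))‖ := by rw [map_sub]; abel_nf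
        _ ≤ M2 * CY * τ * ‖Y t - Y s‖ := this
    have hdecomp : g (Y t) - g (Y s) - (A.comp (Y' s)) (X1 s t)
        = (g (Y t) - g (Y s) - A (Y t - Y s)) + A (Y t - Y s - Y' s (X1 s t)) := by
      rw [show (A.comp (Y' s)) (X1 s t) = A (Y' s (X1 s t)) from rfl, map_sub A (Y t - Y s)]
      abel
    rw [hdecomp]
    have hy := hY s t hs hst ht
    have hr := hR s t hs hst ht
    have h2 : ‖A (Y t - Y s - Y' s (X1 s t))‖ ≤ M1 * (CR * (t - s) ^ (2 / p)) := by
      calc ‖A (Y t - Y s - Y' s (X1 s t))‖ ≤ ‖A‖ * ‖Y t - Y s - Y' s (X1 s t)‖ :=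
            A.le_opNorm _
        _ ≤ M1 * (CR * (t - s) ^ (2 / p)) :=
            mul_le_mul hA1 hr (norm_nonneg _) hM1
    have h1 : ‖g (Y t) - g (Y s) - A (Y t - Y s)‖ ≤ M2 * CY * CY * (t - s) ^ (2 / p) := by
      calc ‖g (Y t) - g (Y s) - A (Y t - Y s)‖ ≤ M2 * CY * τ * ‖Y t - Y s‖ := taylor
        _ ≤ M2 * CY * τ * (CY * τ) :=
            mul_le_mul_of_nonneg_left hy (by positivity)
        _ = M2 * CY * CY * (τ * τ) := by ring
        _ = M2 * CY * CY * (t - s) ^ (2 / p) := by rw [hτ2]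
    calc ‖(g (Y t) - g (Y s) - A (Y t - Y s)) + A (Y t - Y s - Y' s (X1 s t))‖
        ≤ ‖g (Y t) - g (Y s) - A (Y t - Y s)‖ + ‖A (Y t - Y s - Y' s (X1 s t))‖ :=
          norm_add_le _ _
      _ ≤ M2 * CY * CY * (t - s) ^ (2 / p) + M1 * (CR * (t - s) ^ (2 / p)) := add_le_add h1 h2
      _ = (M2 * CY * CY + M1 * CR) * (t - s) ^ (2 / p) := by ring
end
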